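/- arXiv:2604.01890 — 4 statements merged into one kernel-verified Lean document; each statement's English description precedes it below -/
import Mathlib

section
/- Let S be a real symmetric N×N matrix admitting an orthonormal eigenbasis ψ₁,…,ψ_N with corresponding eigenvalues 1 = λ₁ > λ₂ ≥ ⋯ ≥ λ_N > −1 (so 1 is a simple eigenvalue with unit eigenvector ψ₁, and all other eigenvalues lie in (−1,1)). Then the Moore–Penrose pseudoinverse of I − S² is given by the convergent series (I − S²)† = Σ_{i=0}^{∞} (S^{2i} − ψ₁ψ₁ᵀ). -/
open Matrix

/-- `P` is the Moore–Penrose pseudoinverse of `M`. -/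
def IsMoorePenrose {n : Type*} [Fintype n] [DecidableEq n]
    (M P : Matrix n n ℝ) : Prop :=
  M * P * M = M ∧ P * M * P = P ∧ (M * P)ᵀ = M * P ∧ (P * M)ᵀ = P * M

lemma vvmul {N : ℕ} (a b c d : Fin N → ℝ) :
    vecMulVec a b * vecMulVec c d = (b ⬝ᵥ c) • vecMulVec a d := by
  ext i j
  simp only [mul_apply, vecMulVec_apply, Matrix.smul_apply, smul_eq_mul, dotProduct]
  rw [Finset.sum_mul]
  exact Finset.sum_congr rfl fun m _ => by ring

lemma mul_vv {N : ℕ} (S : Matrix (Fin N) (Fin N) ℝ) (a b : Fin N → ℝ) :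
    S * vecMulVec a b = vecMulVec (S.mulVec a) b := by
  ext i j
  simp only [mul_apply, vecMulVec_apply, mulVec, dotProduct]
  rw [Finset.sum_mul]
  exact Finset.sum_congr rfl fun m _ => by ring

lemma mp_unique {n : Type*} [Fintype n] [DecidableEq n]
    (M P Q : Matrix n n ℝ) (hP : IsMoorePenrose M P) (hQ : IsMoorePenrose M Q) :
    P = Q := by
  obtain ⟨hP1, hP2, hP3, hP4⟩ := hP
  obtain ⟨hQ1, hQ2, hQ3, hQ4⟩ := hQ
  have hMP : M * P = M * Q := by
    calc M * P = (M * Q) * (M * P) := by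
          rw [← Matrix.mul_assoc, Matrix.mul_assoc M Q M, ← Matrix.mul_assoc, hQ1]
      _ = (M * Q)ᵀ * (M * P)ᵀ := by rw [hQ3, hP3]
      _ = ((M * P) * (M * Q))ᵀ := (transpose_mul _ _).symm
      _ = ((M * P * M) * Q)ᵀ := by rw [Matrix.mul_assoc (M * P) M Q]
      _ = (M * Q)ᵀ := by rw [hP1]
      _ = M * Q := hQ3
  have hPM : P * M = Q * M := by
    calc P * M = (P * M) * (Q * M) := by
          rw [Matrix.mul_assoc, ← Matrix.mul_assoc M Q M, hQ1]
      _ = (P * M)ᵀ * (Q * M)ᵀ := by rw [hP4, hQ4]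
      _ = ((Q * M) * (P * M))ᵀ := (transpose_mul _ _).symm
      _ = (Q * (M * P * M))ᵀ := by
          rw [Matrix.mul_assoc Q M (P * M), Matrix.mul_assoc M P M]
      _ = (Q * M)ᵀ := by rw [hP1]
      _ = Q * M := hQ4
  calc P = P * M * P := hP2.symm
    _ = Q * M * P := by rw [hPM]
    _ = Q * (M * P) := by rw [Matrix.mul_assoc]
    _ = Q * (M * Q) := by rw [hMP]
    _ = Q * M * Q := by rw [Matrix.mul_assoc]
    _ = Q := hQ2

/-- for a real symmetric matrix `S` with orthonormal eigenbasis
`ψ₁,…,ψ_N` and eigenvalues `1 = λ₁ > λ₂ ≥ ⋯ ≥ λ_N > −1`, the Moore–Penrose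
pseudoinverse of `I − S²` equals the convergent series `Σ_{i=0}^∞ (S^{2i} − ψ₁ψ₁ᵀ)`. -/
theorem stmt0 (N : ℕ) (hN : 2 ≤ N) (S : Matrix (Fin N) (Fin N) ℝ)
    (hS : Sᵀ = S)
    (ψ : Fin N → (Fin N → ℝ)) (lam : Fin N → ℝ)
    (heig : ∀ k, S.mulVec (ψ k) = lam k • ψ k)
    (horth : ∀ k l, ψ k ⬝ᵥ ψ l = if k = l then 1 else 0)
    (hlam0 : lam ⟨0, by omega⟩ = 1)
    (hanti : ∀ k l : Fin N, k ≤ l → lam l ≤ lam k)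
    (hgap : ∀ k : Fin N, k ≠ ⟨0, by omega⟩ → lam k < 1)
    (hlow : ∀ k : Fin N, -1 < lam k)
    (Q : Matrix (Fin N) (Fin N) ℝ)
    (hQ : IsMoorePenrose (1 - S ^ 2) Q) :
    HasSum (fun i : ℕ => S ^ (2 * i) - vecMulVec (ψ ⟨0, by omega⟩) (ψ ⟨0, by omega⟩)) Q := by
  set z : Fin N := ⟨0, by omega⟩ with hzdef
  set Pm : Fin N → Matrix (Fin N) (Fin N) ℝ := fun k => vecMulVec (ψ k) (ψ k) with hPmdef
  have hz1 : lam z = 1 := hlam0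
  -- orthogonality of the projectors
  have hPP : ∀ k l, Pm k * Pm l = if k = l then Pm k else 0 := by
    intro k l
    rw [hPmdef]
    simp only []
    rw [vvmul, horth]
    split <;> simp_all
  -- completeness
  have hone : (∑ k, Pm k) = 1 := by
    set U : Matrix (Fin N) (Fin N) ℝ := of ψ with hU
    have hUU : U * Uᵀ = 1 := by
      ext k l
      simpa [hU, mul_apply, one_apply, dotProduct] using horth k l
    have hUU' : Uᵀ * U = 1 := mul_eq_one_comm.mp hUU
    ext i j
    have := congrFun (congrFun hUU' i) j
    simpa [hU, mul_apply, Matrix.sum_apply, hPmdef, vecMulVec_apply] using this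
  -- S acting on projectors
  have hSP : ∀ k, S * Pm k = lam k • Pm k := by
    intro k
    rw [hPmdef]
    simp only []
    rw [mul_vv, heig]
    ext i j
    simp [vecMulVec_apply, mul_assoc]
  -- powers of S
  have hpow : ∀ n : ℕ, S ^ n = ∑ k, (lam k ^ n) • Pm k := by
    intro n
    induction n with
    | zero => simp [hone]
    | succ n ih =>
      rw [pow_succ', ih, Finset.mul_sum]
      apply Finset.sum_congr rfl
      intro k _
      rw [Matrix.mul_smul, hSP, smul_smul, ← pow_succ]
  have habs : ∀ k : Fin N, k ≠ z → lam k ^ 2 < 1 := by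
    intro k hk
    have h1 := hgap k hk
    have h2 := hlow k
    nlinarith
  have hnz : ∀ k : Fin N, k ≠ z → (1 - lam k ^ 2) ≠ 0 := by
    intro k hk
    have := habs k hk
    intro h; nlinarith
  set t : Finset (Fin N) := Finset.univ.erase z with ht
  have hmem : ∀ k ∈ t, k ≠ z := fun k hk => (Finset.mem_erase.mp hk).1
  -- key product formula for coefficient sums
  have key : ∀ (k l : Fin N) (c d : ℝ), (c • Pm k) * (d • Pm l) =
      if k = l then (c * d) • Pm k else 0 := by
    intro k l c d
    rw [smul_mul_assoc, mul_smul_comm, hPP]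
    split <;> simp [smul_smul]
  have hprod : ∀ (a b : Fin N → ℝ),
      (∑ k ∈ t, a k • Pm k) * (∑ l ∈ t, b l • Pm l) = ∑ k ∈ t, (a k * b k) • Pm k := by
    intro a b
    rw [Finset.sum_mul_sum]
    apply Finset.sum_congr rfl
    intro k hk
    rw [Finset.sum_congr rfl (fun l _ => key k l (a k) (b l)), Finset.sum_ite_eq]
    simp [hk]
  -- the matrix M = 1 - S^2 as a sum
  have hM : (1 : Matrix (Fin N) (Fin N) ℝ) - S ^ 2 = ∑ k ∈ t, (1 - lam k ^ 2) • Pm k := by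
    have h1 : (1 : Matrix (Fin N) (Fin N) ℝ) - S ^ 2 = ∑ k, (1 - lam k ^ 2) • Pm k := by
      rw [hpow 2]
      nth_rewrite 1 [← hone]
      rw [← Finset.sum_sub_distrib]
      exact Finset.sum_congr rfl fun k _ => by rw [sub_smul, one_smul]
    rw [h1, ht]
    exact (Finset.sum_erase _ (by simp [hz1])).symm
  -- candidate pseudoinverse
  set Pc : Matrix (Fin N) (Fin N) ℝ := ∑ k ∈ t, (1 - lam k ^ 2)⁻¹ • Pm k with hPc
  have hcancel : ∀ k ∈ t, (1 - lam k ^ 2) * (1 - lam k ^ 2)⁻¹ = 1 := by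
    intro k hk
    exact mul_inv_cancel₀ (hnz k (hmem k hk))
  have hPt : ∀ k, (Pm k)ᵀ = Pm k := by
    intro k; ext i j; simp [hPmdef, vecMulVec_apply, mul_comm]
  -- symmetry of projection sums
  have hsymm : ∀ (a : Fin N → ℝ), (∑ k ∈ t, a k • Pm k)ᵀ = ∑ k ∈ t, a k • Pm k := by
    intro a
    rw [transpose_sum]
    exact Finset.sum_congr rfl fun k _ => by rw [transpose_smul, hPt]
  -- Moore-Penrose conditions for Pc
  have hMPc : IsMoorePenrose (1 - S ^ 2) Pc := by
    rw [hM, hPc]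
    refine ⟨?_, ?_, ?_, ?_⟩
    · rw [hprod, hprod]
      exact Finset.sum_congr rfl fun k hk => by
        rw [mul_inv_cancel₀ (hnz k (hmem k hk)), one_mul]
    · rw [hprod, hprod]
      exact Finset.sum_congr rfl fun k hk => by
        rw [inv_mul_cancel₀ (hnz k (hmem k hk)), one_mul]
    · rw [hprod]; exact hsymm _
    · rw [hprod]; exact hsymm _
  have hPQ : Pc = Q := mp_unique _ _ _ hMPc hQ
  -- the series
  have hf : ∀ i : ℕ, S ^ (2 * i) - Pm z = ∑ k ∈ t, ((lam k ^ 2) ^ i) • Pm k := by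
    intro i
    rw [hpow (2 * i)]
    rw [Finset.sum_congr rfl (fun k (_ : k ∈ Finset.univ) => by rw [pow_mul])]
    rw [← Finset.sum_erase_add _ _ (Finset.mem_univ z)]
    simp [hz1, ht]
  have hsum : HasSum (fun i : ℕ => ∑ k ∈ t, ((lam k ^ 2) ^ i) • Pm k) Pc := by
    rw [hPc]
    apply hasSum_sum
    intro k hk
    have h1 : (0 : ℝ) ≤ lam k ^ 2 := sq_nonneg _
    have h2 : lam k ^ 2 < 1 := habs k (hmem k hk)
    exact (hasSum_geometric_of_lt_one h1 h2).smul_const _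
  have final : HasSum (fun i : ℕ => S ^ (2 * i) - Pm z) Q := by
    rw [← hPQ]
    simpa only [hf] using hsum
  exact final
end

section
/- Let N ≥ 2 and let x₁,…,x_N be nonnegative real numbers with x_i ∈ [0, Δ_i] for given Δ_i > 0, and set x = Σ_{i=1}^{N} x_i and Δ = (Σ_{i=1}^{N} Δ_i²)^{1/2}. Let β > N^{-1/2} (log N)^{1/2}, and set p = Δ N^{-1/2} (log(2N))^{1/2}/β, assuming 0 < p < 1. Let y₁,…,y_N be independent Bernoulli random variables each with success probability p, and define the estimator x̃ = (Σ_{i=1}^{N} x_i y_i)/p. Then ℙ( |x̃ − x| ≥ N^{1/2} β ) ≤ 1/N. -/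
open MeasureTheory ProbabilityTheory Real

lemma bern_mgf_le' {p : ℝ} (hp0 : 0 ≤ p) (hp1 : p ≤ 1) (s : ℝ) :
    (1 - p + p * Real.exp s) * Real.exp (-(s * p)) ≤ Real.exp (s ^ 2 / 4) := by
  have hD : ∀ u : ℝ, 0 < 1 - p + p * Real.exp u := by
    intro u
    rcases eq_or_lt_of_le hp0 with h | h
    · simp [← h]
    · nlinarith [Real.exp_pos u, mul_pos h (Real.exp_pos u)]
  -- φ' function
  set F : ℝ → ℝ := fun u => p * Real.exp u / (1 - p + p * Real.exp u) - p - u / 2 with hF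
  set φ : ℝ → ℝ := fun u => Real.log (1 - p + p * Real.exp u) - u * p - u ^ 2 / 4 with hφ
  have hDer : ∀ u : ℝ, HasDerivAt (fun v => 1 - p + p * Real.exp v) (p * Real.exp u) u := by
    intro u
    simpa using ((Real.hasDerivAt_exp u).const_mul p).const_add (1 - p)
  have hφDer : ∀ u : ℝ, HasDerivAt φ (F u) u := by
    intro u
    have h1 : HasDerivAt (fun v => Real.log (1 - p + p * Real.exp v))
        (p * Real.exp u / (1 - p + p * Real.exp u)) u := (hDer u).log (hD u).ne'
    have h2 : HasDerivAt (fun v : ℝ => v * p) p u := by simpa using (hasDerivAt_id u).mul_const p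
    have h3 : HasDerivAt (fun v : ℝ => v ^ 2 / 4) (u / 2) u := by
      have := (hasDerivAt_pow 2 u).div_const 4
      simpa [mul_comm] using this.congr_deriv (by ring)
    exact (h1.sub h2).sub h3
  have hFDer : ∀ u : ℝ, HasDerivAt F
      (p * Real.exp u * (1 - p) / (1 - p + p * Real.exp u) ^ 2 - 1 / 2) u := by
    intro u
    have hq : HasDerivAt (fun v => p * Real.exp v / (1 - p + p * Real.exp v))
        ((p * Real.exp u * (1 - p + p * Real.exp u) - p * Real.exp u * (p * Real.exp u)) /
          (1 - p + p * Real.exp u) ^ 2) u :=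
      ((Real.hasDerivAt_exp u).const_mul p).div (hDer u) (hD u).ne'
    have h2 : HasDerivAt (fun v : ℝ => v / 2) (1 / 2 : ℝ) u := by
      simpa using (hasDerivAt_id u).div_const 2
    have := (hq.sub_const p).sub h2
    refine this.congr_deriv ?_
    ring
  have hFanti : Antitone F := by
    apply antitone_of_deriv_nonpos (fun u => (hFDer u).differentiableAt)
    intro u
    rw [(hFDer u).deriv]
    have hDu := hD u
    have he := Real.exp_pos u
    rw [sub_nonpos, div_le_iff₀ (by positivity)]
    nlinarith [sq_nonneg (1 - p - p * Real.exp u)]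
  have hF0 : F 0 = 0 := by simp [hF]
  have hφ0 : φ 0 = 0 := by simp [hφ]
  have key : ∀ u : ℝ, φ u ≤ 0 := by
    intro u
    rcases le_total 0 u with h | h
    · have : AntitoneOn φ (Set.Ici 0) := by
        apply antitoneOn_of_deriv_nonpos (convex_Ici 0)
          (fun v _ => (hφDer v).differentiableAt.continuousAt.continuousWithinAt)
          (fun v _ => (hφDer v).differentiableAt.differentiableWithinAt)
        intro v hv
        rw [(hφDer v).deriv]
        rw [interior_Ici] at hv
        calc F v ≤ F 0 := hFanti hv.le
        _ = 0 := hF0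
      calc φ u ≤ φ 0 := this (by simp) (by simpa using h) h
      _ = 0 := hφ0
    · have : MonotoneOn φ (Set.Iic 0) := by
        apply monotoneOn_of_deriv_nonneg (convex_Iic 0)
          (fun v _ => (hφDer v).differentiableAt.continuousAt.continuousWithinAt)
          (fun v _ => (hφDer v).differentiableAt.differentiableWithinAt)
        intro v hv
        rw [(hφDer v).deriv]
        rw [interior_Iic] at hv
        calc (0:ℝ) = F 0 := hF0.symm
        _ ≤ F v := hFanti hv.le
      calc φ u ≤ φ 0 := this (by simpa using h) (by simp) h
      _ = 0 := hφ0
  have hu := key s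
  have : Real.log (1 - p + p * Real.exp s) - s * p ≤ s ^ 2 / 4 := by
    have := hu; simp only [hφ] at this; linarith
  calc (1 - p + p * Real.exp s) * Real.exp (-(s * p))
      = Real.exp (Real.log (1 - p + p * Real.exp s) - s * p) := by
        rw [Real.exp_sub, Real.exp_log (hD s), Real.exp_neg]; ring_nf
    _ ≤ Real.exp (s ^ 2 / 4) := Real.exp_le_exp.2 this

/-- Bernoulli subsampling estimator. -/
theorem stmt4 {Ω : Type*} [MeasurableSpace Ω] (μ : Measure Ω)
    [IsProbabilityMeasure μ]
    (N : ℕ) (hN : 2 ≤ N)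
    (x Δ : Fin N → ℝ) (hΔpos : ∀ i, 0 < Δ i)
    (hx : ∀ i, x i ∈ Set.Icc 0 (Δ i))
    (β : ℝ) (hβ : Real.sqrt (Real.log N) / Real.sqrt N < β)
    (p : ℝ)
    (hp : p = Real.sqrt (∑ i, (Δ i) ^ 2) * Real.sqrt (Real.log (2 * N)) /
        (Real.sqrt N * β))
    (hp0 : 0 < p) (hp1 : p < 1)
    (y : Fin N → Ω → ℝ) (hmeas : ∀ i, Measurable (y i))
    (hindep : iIndepFun y μ)
    (hval : ∀ i, ∀ ω, y i ω = 0 ∨ y i ω = 1)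
    (hbern : ∀ i, μ {ω | y i ω = 1} = ENNReal.ofReal p) :
    μ {ω | Real.sqrt N * β ≤ |(∑ i, x i * y i ω) / p - ∑ i, x i|} ≤
      (N : ENNReal)⁻¹ := by
  have hNR : (2 : ℝ) ≤ (N : ℝ) := by exact_mod_cast hN
  have hNpos : (0 : ℝ) < N := by linarith
  have hβpos : 0 < β := by
    have h0 : (0:ℝ) ≤ Real.sqrt (Real.log N) / Real.sqrt N := by positivity
    linarith
  set A2 : ℝ := ∑ i, (Δ i) ^ 2 with hA2
  have hA2pos : 0 < A2 := Finset.sum_pos (fun i _ => pow_pos (hΔpos i) 2) ⟨⟨0, by omega⟩, Finset.mem_univ _⟩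
  set L : ℝ := Real.log (2 * N) with hL
  have hLpos : 0 < L := Real.log_pos (by linarith)
  set ε : ℝ := p * (Real.sqrt N * β) with hε
  have hsNβ : 0 < Real.sqrt N * β := by positivity
  have hεeq : ε = Real.sqrt A2 * Real.sqrt L := by
    rw [hε, hp, div_mul_cancel₀ _ hsNβ.ne']
  have hεpos : 0 < ε := by rw [hεeq]; positivity
  have hε2 : ε ^ 2 = A2 * L := by
    rw [hεeq, mul_pow, Real.sq_sqrt hA2pos.le, Real.sq_sqrt hLpos.le]
  -- the centered variables
  set X : Fin N → Ω → ℝ := fun i ω => x i * (y i ω - p) with hX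
  have hXmeas : ∀ i, Measurable (X i) := fun i => ((hmeas i).sub_const p).const_mul (x i)
  have hXindep : iIndepFun X μ := by
    have := hindep.comp (fun i (v : ℝ) => x i * (v - p))
      (fun i => (measurable_id.sub_const p).const_mul (x i))
    exact this
  -- pointwise exponential identity
  have hXexp : ∀ (i : Fin N) (t : ℝ), (fun ω => Real.exp (t * X i ω)) =
      fun ω => Real.exp (-(t * x i * p)) * (1 + (Real.exp (t * x i) - 1) * y i ω) := by
    intro i t
    funext ω
    rcases hval i ω with h | h <;> rw [hX] <;> simp only [h]
    · rw [mul_zero, add_zero, mul_one]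
      congr 1; ring
    · have h1 : (1:ℝ) + (Real.exp (t * x i) - 1) * 1 = Real.exp (t * x i) := by ring
      rw [h1, ← Real.exp_add]
      congr 1; ring
  -- integrability and mean of y i
  have hset : ∀ i, MeasurableSet {ω | y i ω = 1} :=
    fun i => hmeas i (measurableSet_singleton 1)
  have hyind : ∀ i, y i = Set.indicator {ω | y i ω = 1} (fun _ => (1 : ℝ)) := by
    intro i; funext ω
    rcases hval i ω with h | h
    · rw [h]
      exact (Set.indicator_of_notMem (s := {ω | y i ω = 1}) (f := fun _ => (1:ℝ)) (show ω ∉ _ by simp [Set.mem_setOf_eq, h])).symm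
    · rw [h]
      exact (Set.indicator_of_mem (show ω ∈ {ω | y i ω = 1} from h) (fun _ => (1:ℝ))).symm
  have hyint : ∀ i, Integrable (y i) μ := by
    intro i; rw [hyind i]; exact (integrable_const 1).indicator (hset i)
  have hymean : ∀ i, ∫ ω, y i ω ∂μ = p := by
    intro i
    conv_lhs => rw [hyind i]
    rw [integral_indicator_const _ (hset i), measureReal_def, hbern i, smul_eq_mul, mul_one,
      ENNReal.toReal_ofReal hp0.le]
  have hint : ∀ (i : Fin N) (t : ℝ), Integrable (fun ω => Real.exp (t * X i ω)) μ := by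
    intro i t
    rw [hXexp i t]
    exact (((integrable_const (1:ℝ)).add ((hyint i).const_mul _)).const_mul _)
  -- mgf of each term
  have hmgf : ∀ (i : Fin N) (t : ℝ), mgf (X i) μ t ≤ Real.exp ((t * x i) ^ 2 / 4) := by
    intro i t
    have : mgf (X i) μ t =
        Real.exp (-(t * x i * p)) * (1 + (Real.exp (t * x i) - 1) * p) := by
      rw [mgf, hXexp i t, integral_const_mul, integral_add (integrable_const 1)
        ((hyint i).const_mul _), integral_const_mul, hymean i]
      simp [measure_univ]
    rw [this]
    have h2 : Real.exp (-(t * x i * p)) * (1 + (Real.exp (t * x i) - 1) * p) =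
        (1 - p + p * Real.exp (t * x i)) * Real.exp (-(t * x i * p)) := by ring
    rw [h2]
    exact bern_mgf_le' hp0.le hp1.le (t * x i)
  -- the sum
  set S : Ω → ℝ := ∑ i, X i with hS
  have hSval : ∀ ω, S ω = (∑ i, x i * y i ω) - p * ∑ i, x i := by
    intro ω
    rw [hS, Finset.sum_apply, Finset.mul_sum, ← Finset.sum_sub_distrib]
    exact Finset.sum_congr rfl (fun i _ => by rw [hX]; ring)
  have hSint : ∀ t : ℝ, Integrable (fun ω => Real.exp (t * S ω)) μ := by
    intro t
    exact hXindep.integrable_exp_mul_sum hXmeas (fun i _ => hint i t)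
  have hSmgf : ∀ t : ℝ, mgf S μ t ≤ Real.exp (t ^ 2 * A2 / 4) := by
    intro t
    rw [hS, hXindep.mgf_sum hXmeas]
    calc (∏ i, mgf (X i) μ t) ≤ ∏ i, Real.exp ((t * x i) ^ 2 / 4) :=
          Finset.prod_le_prod (fun i _ => mgf_nonneg) (fun i _ => hmgf i t)
      _ = Real.exp (∑ i, (t * x i) ^ 2 / 4) := by rw [Real.exp_sum]
      _ ≤ Real.exp (t ^ 2 * A2 / 4) := by
          apply Real.exp_le_exp.2
          rw [hA2, Finset.mul_sum, ← Finset.sum_div]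
          apply div_le_div_of_nonneg_right ?_ (by norm_num)
          apply Finset.sum_le_sum
          intro i _
          rw [mul_pow]
          have hxi := hx i
          have : x i ^ 2 ≤ Δ i ^ 2 := by nlinarith [hxi.1, hxi.2]
          nlinarith [sq_nonneg t]
  -- Chernoff bound both sides
  set t : ℝ := 2 * ε / A2 with ht
  have htpos : 0 < t := by positivity
  have hexp_bound : Real.exp (-(t * ε)) * Real.exp (t ^ 2 * A2 / 4) = Real.exp (-L) := by
    rw [← Real.exp_add]
    congr 1
    have h1 : t ^ 2 * A2 / 4 = ε ^ 2 / A2 := by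
      rw [ht]; field_simp; ring
    have h2 : t * ε = 2 * ε ^ 2 / A2 := by rw [ht]; ring
    rw [h1, h2, hε2]
    field_simp
    ring
  have hup : (μ {ω | ε ≤ S ω}).toReal ≤ Real.exp (-L) := by
    calc (μ {ω | ε ≤ S ω}).toReal ≤ Real.exp (-t * ε) * mgf S μ t :=
          measure_ge_le_exp_mul_mgf ε htpos.le (hSint t)
      _ ≤ Real.exp (-(t * ε)) * Real.exp (t ^ 2 * A2 / 4) := by
          rw [neg_mul]
          exact mul_le_mul_of_nonneg_left (hSmgf t) (Real.exp_pos _).le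
      _ = Real.exp (-L) := hexp_bound
  have hdown : (μ {ω | S ω ≤ -ε}).toReal ≤ Real.exp (-L) := by
    calc (μ {ω | S ω ≤ -ε}).toReal ≤ Real.exp (-(-t) * -ε) * mgf S μ (-t) :=
          measure_le_le_exp_mul_mgf (-ε) (neg_nonpos.2 htpos.le) (hSint (-t))
      _ ≤ Real.exp (-(t * ε)) * Real.exp (t ^ 2 * A2 / 4) := by
          have he : -(-t) * -ε = -(t * ε) := by ring
          rw [he]
          have h := hSmgf (-t)
          have h2 : (-t) ^ 2 * A2 / 4 = t ^ 2 * A2 / 4 := by ring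
          rw [h2] at h
          exact mul_le_mul_of_nonneg_left h (Real.exp_pos _).le
      _ = Real.exp (-L) := hexp_bound
  -- event inclusion
  have hmono : {ω | Real.sqrt N * β ≤ |(∑ i, x i * y i ω) / p - ∑ i, x i|} ⊆
      {ω | ε ≤ S ω} ∪ {ω | S ω ≤ -ε} := by
    intro ω hω
    simp only [Set.mem_setOf_eq, Set.mem_union] at hω ⊢
    have hSω : S ω = p * ((∑ i, x i * y i ω) / p - ∑ i, x i) := by
      rw [hSval ω]; field_simp
    have habs : ε ≤ |S ω| := by
      rw [hSω, abs_mul, abs_of_pos hp0, hε]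
      exact mul_le_mul_of_nonneg_left hω hp0.le
    rcases le_abs.1 habs with h | h
    · exact Or.inl h
    · exact Or.inr (by linarith)
  have hexpL : Real.exp (-L) = (2 * (N : ℝ))⁻¹ := by
    rw [hL, Real.exp_neg, Real.exp_log (by positivity)]
  calc μ {ω | Real.sqrt N * β ≤ |(∑ i, x i * y i ω) / p - ∑ i, x i|}
      ≤ μ ({ω | ε ≤ S ω} ∪ {ω | S ω ≤ -ε}) := measure_mono hmono
    _ ≤ μ {ω | ε ≤ S ω} + μ {ω | S ω ≤ -ε} := measure_union_le _ _
    _ ≤ ENNReal.ofReal (Real.exp (-L)) + ENNReal.ofReal (Real.exp (-L)) := by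
        gcongr
        · rw [← ENNReal.ofReal_toReal (measure_ne_top μ _)]
          exact ENNReal.ofReal_le_ofReal hup
        · rw [← ENNReal.ofReal_toReal (measure_ne_top μ _)]
          exact ENNReal.ofReal_le_ofReal hdown
    _ ≤ (N : ENNReal)⁻¹ := by
        rw [← ENNReal.ofReal_add (Real.exp_pos _).le (Real.exp_pos _).le]
        have hsum : Real.exp (-L) + Real.exp (-L) = ((N : ℝ))⁻¹ := by
          rw [hexpL]
          field_simp
          norm_num
        rw [hsum, ← ENNReal.ofReal_natCast N, ← ENNReal.ofReal_inv_of_pos hNpos]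
end

section
/- Let L be a real symmetric positive semidefinite N×N matrix satisfying L𝟏 = 𝟎 whose kernel is exactly the span of the all-ones vector 𝟏, let D be a diagonal N×N matrix with positive diagonal entries d₁,…,d_N, set d_sum = Σ_i d_i, 𝓛 = D^{-1/2} L D^{-1/2}, and let π ∈ ℝ^N be the vector with π_i = d_i/d_sum. Then for every index i, the i-th diagonal entry of 𝓛† satisfies e_iᵀ 𝓛† e_i = d_i (e_i − π)ᵀ L† (e_i − π). -/
open Matrix

section Aux
set_option linter.unusedSectionVars false
variable {n : Type*} [Fintype n] [DecidableEq n]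

lemma my_vecMulVec_mul (a b : n → ℝ) (M : Matrix n n ℝ) :
    vecMulVec a b * M = vecMulVec a (b ᵥ* M) := by
  ext i j
  simp [vecMulVec_apply, mul_apply, vecMul, dotProduct, Finset.mul_sum, mul_assoc]

lemma my_mul_vecMulVec (a b : n → ℝ) (M : Matrix n n ℝ) :
    M * vecMulVec a b = vecMulVec (M *ᵥ a) b := by
  ext i j
  simp [vecMulVec_apply, mul_apply, mulVec, dotProduct, Finset.sum_mul, mul_assoc]

lemma my_vecMulVec_mulVec (a b x : n → ℝ) :
    vecMulVec a b *ᵥ x = (b ⬝ᵥ x) • a := by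
  ext i
  simp only [mulVec, vecMulVec_apply, dotProduct, Pi.smul_apply, smul_eq_mul,
    Finset.sum_mul]
  exact Finset.sum_congr rfl fun k _ => by ring

lemma my_vecMul_vecMulVec (a b x : n → ℝ) :
    x ᵥ* vecMulVec a b = (x ⬝ᵥ a) • b := by
  ext j
  simp only [vecMul, vecMulVec_apply, dotProduct, Pi.smul_apply, smul_eq_mul, Finset.sum_mul]
  exact Finset.sum_congr rfl fun k _ => by ring

lemma my_vecMulVec_transpose (a b : n → ℝ) : (vecMulVec a b)ᵀ = vecMulVec b a := by
  ext i j; simp [vecMulVec_apply, mul_comm]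

lemma my_vecMulVec_zero_left (b : n → ℝ) : vecMulVec (0 : n → ℝ) b = 0 := by
  ext i j; simp [vecMulVec_apply]

lemma my_vecMulVec_zero_right (a : n → ℝ) : vecMulVec a (0 : n → ℝ) = 0 := by
  ext i j; simp [vecMulVec_apply]

lemma my_vecMul_smul_matrix (c : ℝ) (A : Matrix n n ℝ) (x : n → ℝ) :
    x ᵥ* (c • A) = c • (x ᵥ* A) := by
  ext j
  simp only [vecMul, dotProduct, Matrix.smul_apply, Pi.smul_apply, smul_eq_mul,
    Finset.mul_sum]
  exact Finset.sum_congr rfl fun k _ => by ring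

lemma mp_unique_s6 (M P₁ P₂ : Matrix n n ℝ)
    (h₁ : IsMoorePenrose M P₁) (h₂ : IsMoorePenrose M P₂) :
    P₁ = P₂ := by
  obtain ⟨a1, b1, c1, d1⟩ := h₁
  obtain ⟨a2, b2, c2, d2⟩ := h₂
  have hMP : M * P₁ = M * P₂ := by
    calc M * P₁ = (M * P₁)ᵀ := c1.symm
    _ = ((M * P₂ * M) * P₁)ᵀ := by rw [a2]
    _ = (M * P₁)ᵀ * (M * P₂)ᵀ := by simp only [transpose_mul, mul_assoc]
    _ = (M * P₁) * (M * P₂) := by rw [c1, c2]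
    _ = (M * P₁ * M) * P₂ := by simp only [mul_assoc]
    _ = M * P₂ := by rw [a1]
  have hPM : P₁ * M = P₂ * M := by
    calc P₁ * M = (P₁ * M)ᵀ := d1.symm
    _ = (P₁ * (M * P₂ * M))ᵀ := by rw [a2]
    _ = (P₂ * M)ᵀ * (P₁ * M)ᵀ := by simp only [transpose_mul, mul_assoc]
    _ = (P₂ * M) * (P₁ * M) := by rw [d1, d2]
    _ = P₂ * (M * P₁ * M) := by simp only [mul_assoc]
    _ = P₂ * M := by rw [a1]
  calc P₁ = P₁ * M * P₁ := b1.symm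
  _ = P₂ * M * P₁ := by rw [hPM]
  _ = P₂ * (M * P₂) := by rw [mul_assoc, hMP]
  _ = P₂ := by rw [← mul_assoc, b2]

end Aux

/-- with `L`, `D`, `𝓛 = D^{-1/2} L D^{-1/2}` and `π_i = d_i/d_sum`
as below, every diagonal entry of `𝓛†` satisfies
`e_iᵀ 𝓛† e_i = d_i (e_i − π)ᵀ L† (e_i − π)`. -/
theorem stmt6 (N : ℕ) (hN : 2 ≤ N)
    (L : Matrix (Fin N) (Fin N) ℝ) (hPSD : L.PosSemidef)
    (hker : ∀ v : Fin N → ℝ, L.mulVec v = 0 ↔ ∃ c : ℝ, v = fun _ => c)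
    (hL1 : L.mulVec (fun _ => 1) = 0)
    (d : Fin N → ℝ) (hdpos : ∀ i, 0 < d i)
    (dsum : ℝ) (hdsum : dsum = ∑ i, d i)
    (pv : Fin N → ℝ) (hpv : ∀ i, pv i = d i / dsum)
    (Lp Np : Matrix (Fin N) (Fin N) ℝ)
    (hLp : IsMoorePenrose L Lp)
    (hNp : IsMoorePenrose
        (Matrix.diagonal (fun i => (Real.sqrt (d i))⁻¹) * L *
          Matrix.diagonal (fun i => (Real.sqrt (d i))⁻¹)) Np)
    (i : Fin N) :
    Pi.single i 1 ⬝ᵥ Np.mulVec (Pi.single i 1) =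
      d i * ((Pi.single i 1 - pv) ⬝ᵥ Lp.mulVec (Pi.single i 1 - pv)) := by
  classical
  obtain ⟨hax1, hax2, hax3, hax4⟩ := hLp
  set o : Fin N → ℝ := (fun _ => 1) with ho
  set uv : Fin N → ℝ := (fun j => Real.sqrt (d j)) with huv
  set A : Matrix (Fin N) (Fin N) ℝ :=
    Matrix.diagonal (fun i => (Real.sqrt (d i))⁻¹) * L *
      Matrix.diagonal (fun i => (Real.sqrt (d i))⁻¹) with hA
  set Si : Matrix (Fin N) (Fin N) ℝ :=
    Matrix.diagonal (fun i => (Real.sqrt (d i))⁻¹) with hSi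
  set S : Matrix (Fin N) (Fin N) ℝ := Matrix.diagonal uv with hS
  set Q : Matrix (Fin N) (Fin N) ℝ := 1 - dsum⁻¹ • vecMulVec uv uv with hQ
  set Pi1 : Matrix (Fin N) (Fin N) ℝ := 1 - (N:ℝ)⁻¹ • vecMulVec o o with hPi1
  set P : Matrix (Fin N) (Fin N) ℝ := Q * S * Lp * (S * Q) with hP
  -- scalar facts
  have hN0 : (N:ℝ) ≠ 0 := Nat.cast_ne_zero.2 (by omega)
  have hdsumpos : 0 < dsum := by
    rw [hdsum]
    exact Finset.sum_pos (fun j _ => hdpos j) ⟨⟨0, by omega⟩, Finset.mem_univ _⟩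
  have hs0 : dsum ≠ 0 := ne_of_gt hdsumpos
  have huveq : ∀ j, uv j = Real.sqrt (d j) := fun j => by rw [huv]
  have hupos : ∀ j, 0 < uv j := fun j => by rw [huveq]; exact Real.sqrt_pos.2 (hdpos j)
  have hu0 : ∀ j, uv j ≠ 0 := fun j => ne_of_gt (hupos j)
  have husq : ∀ j, uv j * uv j = d j := fun j => by
    rw [huveq]; exact Real.mul_self_sqrt (hdpos j).le
  -- symmetry of L
  have hLsym : Lᵀ = L := by
    ext a b
    have := congrFun (congrFun hPSD.1 a) b
    simpa [Matrix.conjTranspose_apply] using this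
  have hoL : o ᵥ* L = 0 := by rw [← hLsym, vecMul_transpose, hL1]
  have hLvd : ∀ b : Fin N → ℝ, L * vecMulVec o b = 0 := by
    intro b
    rw [my_mul_vecMulVec, hL1, my_vecMulVec_zero_left]
  -- kernel lemma
  have hker0 : ∀ M : Matrix (Fin N) (Fin N) ℝ, L * M = 0 → o ᵥ* M = 0 → M = 0 := by
    intro M hLM hoM
    ext a b
    have hcol : L *ᵥ (fun k => M k b) = 0 := by
      funext r
      have := congrFun (congrFun hLM r) b
      simpa [mul_apply, mulVec, dotProduct] using this
    obtain ⟨c, hc⟩ := (hker _).1 hcol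
    have hM : ∀ k, M k b = c := fun k => congrFun hc k
    have hsum : ∑ k, M k b = 0 := by
      have := congrFun hoM b
      simpa [vecMul, dotProduct, ho] using this
    rw [Finset.sum_congr rfl (fun k _ => hM k), Finset.sum_const, Finset.card_univ,
      Fintype.card_fin, nsmul_eq_mul] at hsum
    have hc0 : c = 0 := by
      rcases mul_eq_zero.1 hsum with h | h
      · exact absurd h hN0
      · exact h
    simp [hM a, hc0]
  have hoo : o ⬝ᵥ o = (N:ℝ) := by simp [dotProduct, ho]
  have hoPi1 : o ᵥ* Pi1 = 0 := by
    rw [hPi1, vecMul_sub, vecMul_one, my_vecMul_smul_matrix, my_vecMul_vecMulVec,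
      hoo, smul_smul, inv_mul_cancel₀ hN0, one_smul, sub_self]
  have hLPi1 : L * Pi1 = L := by
    rw [hPi1, mul_sub, mul_one, mul_smul_comm, hLvd, smul_zero, sub_zero]
  have hLLL : L * (L * Lp) = L := by
    rw [← transpose_inj (A := L * (L * Lp)), transpose_mul, hax3, hLsym, hax1]
  have hLLp : L * Lp = Pi1 := by
    have h0 : L * (Pi1 - L * Lp) = 0 := by
      rw [mul_sub, hLPi1, hLLL, sub_self]
    have h1 : o ᵥ* (Pi1 - L * Lp) = 0 := by
      have h2 : o ᵥ* (L * Lp) = 0 := by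
        rw [← vecMul_vecMul, hoL, zero_vecMul]
      rw [vecMul_sub, h2, hoPi1, sub_zero]
    exact (sub_eq_zero.1 (hker0 _ h0 h1)).symm
  have hLpL : Lp * L = Pi1 := by
    have h0 : L * (Pi1 - Lp * L) = 0 := by
      rw [mul_sub, hLPi1, ← mul_assoc, hax1, sub_self]
    have h1 : o ᵥ* (Pi1 - Lp * L) = 0 := by
      have h2 : o ᵥ* (Lp * L) = 0 := by
        rw [← hax4, vecMul_transpose, ← mulVec_mulVec, hL1, mulVec_zero]
      rw [vecMul_sub, h2, hoPi1, sub_zero]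
    exact (sub_eq_zero.1 (hker0 _ h0 h1)).symm
  -- diagonal facts
  have hSiS : Si * S = 1 := by
    rw [hSi, hS, diagonal_mul_diagonal,
      show (fun j => (Real.sqrt (d j))⁻¹ * uv j) = fun _ => (1:ℝ) from
        funext fun j => by rw [huveq]; exact inv_mul_cancel₀ (by rw [← huveq]; exact hu0 j),
      diagonal_one]
  have hSSi : S * Si = 1 := by
    rw [hSi, hS, diagonal_mul_diagonal,
      show (fun j => uv j * (Real.sqrt (d j))⁻¹) = fun _ => (1:ℝ) from
        funext fun j => by rw [← huveq]; exact mul_inv_cancel₀ (hu0 j),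
      diagonal_one]
  have hSiuv : Si *ᵥ uv = o := by
    funext j
    rw [hSi, mulVec_diagonal, ← huveq, ho]
    exact inv_mul_cancel₀ (hu0 j)
  have huvSi : uv ᵥ* Si = o := by
    funext j
    rw [hSi, vecMul_diagonal, ← huveq, ho]
    exact mul_inv_cancel₀ (hu0 j)
  have hSo : S *ᵥ o = uv := by
    funext j; rw [hS, mulVec_diagonal, ho]; exact mul_one _
  have hoS : o ᵥ* S = uv := by
    funext j; rw [hS, vecMul_diagonal, ho]; exact one_mul _
  have hSio : Si *ᵥ o = fun j => (uv j)⁻¹ := by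
    funext j; rw [hSi, mulVec_diagonal, ho, ← huveq]; exact mul_one _
  have hoSi : o ᵥ* Si = fun j => (uv j)⁻¹ := by
    funext j; rw [hSi, vecMul_diagonal, ho, ← huveq]; exact one_mul _
  -- Q facts
  have huu : uv ⬝ᵥ uv = dsum := by
    rw [hdsum]; exact Finset.sum_congr rfl fun j _ => husq j
  have hQu : Q *ᵥ uv = 0 := by
    rw [hQ, sub_mulVec, one_mulVec, smul_mulVec, my_vecMulVec_mulVec, huu,
      smul_smul, inv_mul_cancel₀ hs0, one_smul, sub_self]
  have huQ : uv ᵥ* Q = 0 := by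
    rw [hQ, vecMul_sub, vecMul_one, my_vecMul_smul_matrix, my_vecMul_vecMulVec, huu,
      smul_smul, inv_mul_cancel₀ hs0, one_smul, sub_self]
  have hQsym : Qᵀ = Q := by
    rw [hQ, transpose_sub, transpose_one, transpose_smul, my_vecMulVec_transpose]
  have hSsym : Sᵀ = S := by rw [hS, diagonal_transpose]
  have hQQ : Q * Q = Q := by
    nth_rewrite 1 [hQ]
    rw [sub_mul, one_mul, smul_mul_assoc, my_vecMulVec_mul, huQ,
      my_vecMulVec_zero_right, smul_zero, sub_zero]
  -- A facts
  have hAuv : A *ᵥ uv = 0 := by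
    rw [hA, ← mulVec_mulVec, hSiuv, ← mulVec_mulVec, hL1, mulVec_zero]
  have huvA : uv ᵥ* A = 0 := by
    rw [hA, ← vecMul_vecMul, ← vecMul_vecMul, huvSi, hoL, zero_vecMul]
  have hQA : Q * A = A := by
    nth_rewrite 1 [hQ]
    rw [sub_mul, one_mul, smul_mul_assoc, my_vecMulVec_mul, huvA,
      my_vecMulVec_zero_right, smul_zero, sub_zero]
  have hAQ : A * Q = A := by
    nth_rewrite 1 [hQ]
    rw [mul_sub, mul_one, mul_smul_comm, my_mul_vecMulVec, hAuv,
      my_vecMulVec_zero_left, smul_zero, sub_zero]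
  -- A * P = Q
  have hAP : A * P = Q := by
    have step1 : A * P = ((A * Q) * S) * Lp * (S * Q) := by
      rw [hP]; simp only [mul_assoc]
    rw [step1, hAQ, hA, mul_assoc (Si * L) Si S, hSiS, mul_one,
      mul_assoc Si L Lp, hLLp]
    -- Si * Pi1 * (S * Q) = Q
    have hSiPi1 : Si * Pi1 = Si - (N:ℝ)⁻¹ • vecMulVec (fun j => (uv j)⁻¹) o := by
      rw [hPi1, mul_sub, mul_one, mul_smul_comm, my_mul_vecMulVec, hSio]
    rw [hSiPi1, sub_mul, smul_mul_assoc, ← mul_assoc Si S Q, hSiS, one_mul,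
      my_vecMulVec_mul, ← vecMul_vecMul, hoS, huQ, my_vecMulVec_zero_right,
      smul_zero, sub_zero]
  -- P * A = Q
  have hPA : P * A = Q := by
    have step1 : P * A = Q * S * Lp * (S * (Q * A)) := by
      rw [hP]; simp only [mul_assoc]
    rw [step1, hQA, hA,
      show S * (Si * L * Si) = L * Si from by
        rw [← mul_assoc, ← mul_assoc, hSSi, one_mul],
      mul_assoc (Q * S) Lp (L * Si), ← mul_assoc Lp L Si, hLpL]
    -- Q * S * (Pi1 * Si) = Q
    have hPi1Si : Pi1 * Si = Si - (N:ℝ)⁻¹ • vecMulVec o (fun j => (uv j)⁻¹) := by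
      rw [hPi1, sub_mul, one_mul, smul_mul_assoc, my_vecMulVec_mul, hoSi]
    rw [hPi1Si, mul_sub, mul_assoc Q S Si, hSSi, mul_one, mul_smul_comm,
      show Q * S * vecMulVec o (fun j => (uv j)⁻¹) = 0 from by
        rw [mul_assoc, my_mul_vecMulVec, hSo, my_mul_vecMulVec, hQu,
          my_vecMulVec_zero_left],
      smul_zero, sub_zero]
  -- Moore–Penrose axioms for A, P
  have hPax : IsMoorePenrose A P := by
    refine ⟨?_, ?_, ?_, ?_⟩
    · rw [hAP, hQA]
    · rw [hPA, hP,
        show Q * (Q * S * Lp * (S * Q)) = ((Q * Q) * S) * Lp * (S * Q) from by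
          simp only [mul_assoc],
        hQQ]
    · rw [hAP, hQsym]
    · rw [hPA, hQsym]
  have hNpP : Np = P := mp_unique_s6 A Np P hNp hPax
  rw [hNpP]
  -- final computation
  set e : Fin N → ℝ := Pi.single i 1 with he
  have hQe : Q *ᵥ e = e - (dsum⁻¹ * uv i) • uv := by
    rw [hQ, sub_mulVec, one_mulVec, smul_mulVec, my_vecMulVec_mulVec, he,
      dotProduct_single, mul_one, smul_smul]
  have hw : (S * Q) *ᵥ e = uv i • (e - pv) := by
    rw [← mulVec_mulVec, hQe]
    funext j
    rw [hS, mulVec_diagonal]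
    simp only [Pi.sub_apply, Pi.smul_apply, smul_eq_mul, he, hpv]
    by_cases hj : j = i
    · subst hj
      rw [Pi.single_eq_same]
      have h1 : uv j * uv j = d j := husq j
      rw [mul_assoc dsum⁻¹ (uv j) (uv j), h1]
      field_simp
    · rw [Pi.single_eq_of_ne hj]
      have h1 : uv j * uv j = d j := husq j
      rw [show uv j * (0 - dsum⁻¹ * uv i * uv j) = -(dsum⁻¹ * uv i * (uv j * uv j)) from by
        ring, h1]
      field_simp
      ring
  calc e ⬝ᵥ P *ᵥ e
      = e ⬝ᵥ ((Q * S) *ᵥ (Lp *ᵥ ((S * Q) *ᵥ e))) := by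
        conv_rhs => rw [mulVec_mulVec, mulVec_mulVec]
    _ = (e ᵥ* (Q * S)) ⬝ᵥ (Lp *ᵥ ((S * Q) *ᵥ e)) := dotProduct_mulVec _ _ _
    _ = ((S * Q) *ᵥ e) ⬝ᵥ (Lp *ᵥ ((S * Q) *ᵥ e)) := by
        rw [show Q * S = (S * Q)ᵀ from by rw [transpose_mul, hQsym, hSsym],
          vecMul_transpose]
    _ = (uv i • (e - pv)) ⬝ᵥ (Lp *ᵥ (uv i • (e - pv))) := by rw [hw]
    _ = d i * ((e - pv) ⬝ᵥ Lp *ᵥ (e - pv)) := by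
        rw [mulVec_smul, smul_dotProduct, dotProduct_smul, smul_eq_mul, smul_eq_mul,
          ← mul_assoc, husq]
end

section
/- Let (F_g)_{g≥0} be the pseudofractal scale-free web defined below, let P_g be its transition matrix, and let λ₂,…,λ_{N_g} be the eigenvalues of P_g other than the simple eigenvalue 1 (counted with multiplicity), where N_g is the number of nodes of F_g. Then for every g ≥ 2, the Kemeny constant of the two-step chain, K(F'_g) = Σ_{k=2}^{N_g} 1/(1 − λ_k²), satisfies the closed-form identity K(F'_g) = Σ_{s=0}^{g} 2^{2s+1}·(3^{g−s−1} + 1)/(2^{s+2} − 3) + Σ_{s=0}^{g−2} 2^{2s−1}·(3^{g−s} − 3)/(2^{s+1} − 1), where 3^{g−s−1} is interpreted as the real power (so 3^{−1} = 1/3 when s = g). -/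
open SimpleGraph

def extendGraph {V : Type} (G : SimpleGraph V) : SimpleGraph (V ⊕ G.edgeSet) where
  Adj x y :=
    match x, y with
    | Sum.inl u, Sum.inl v => G.Adj u v
    | Sum.inl u, Sum.inr e => u ∈ (e : Sym2 V)
    | Sum.inr e, Sum.inl u => u ∈ (e : Sym2 V)
    | Sum.inr _, Sum.inr _ => False
  symm := by
    constructor
    rintro (u | e) (v | f) h
    · exact G.adj_symm h
    · exact h
    · exact h
    · exact h.elim
  loopless := by
    constructor
    rintro (u | e) h
    · exact G.irrefl h
    · exact h

def extendDec {V : Type} [DecidableEq V] (G : SimpleGraph V) [DecidableRel G.Adj] :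
    DecidableRel (extendGraph G).Adj := fun x y =>
  match x, y with
  | Sum.inl u, Sum.inl v => inferInstanceAs (Decidable (G.Adj u v))
  | Sum.inl u, Sum.inr e => inferInstanceAs (Decidable (u ∈ (e : Sym2 V)))
  | Sum.inr e, Sum.inl u => inferInstanceAs (Decidable (u ∈ (e : Sym2 V)))
  | Sum.inr _, Sum.inr _ => inferInstanceAs (Decidable False)

structure GB where
  V : Type
  fin : Fintype V
  deq : DecidableEq V
  G : SimpleGraph V
  dec : DecidableRel G.Adj

def extendGB (X : GB) : GB :=
  letI := X.fin
  letI := X.deq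
  letI := X.dec
  { V := X.V ⊕ X.G.edgeSet
    fin := inferInstance
    deq := inferInstance
    G := extendGraph X.G
    dec := extendDec X.G }

def PGB : ℕ → GB
  | 0 =>
    { V := Fin 3
      fin := inferInstance
      deq := inferInstance
      G := ⊤
      dec := inferInstance }
  | g + 1 => extendGB (PGB g)

noncomputable def transMat (X : GB) : Matrix X.V X.V ℝ :=
  letI := X.fin
  letI := X.deq
  letI := X.dec
  Matrix.of fun u v => (if X.G.Adj u v then (1 : ℝ) else 0) / (X.G.degree u : ℝ)

noncomputable def transCharRoots (X : GB) : Multiset ℝ :=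
  letI := X.fin
  letI := X.deq
  (transMat X).charpoly.roots

open Finset Matrix Polynomial

section Basics

variable {V : Type} [Fintype V] [DecidableEq V] (G : SimpleGraph V) [DecidableRel G.Adj]

lemma sum_inc (u : V) : ∑ e : G.edgeSet, (if u ∈ (e : Sym2 V) then (1:ℕ) else 0) = G.degree u := by
  rw [Finset.sum_set_coe (f := fun e => if u ∈ e then (1:ℕ) else 0) (s := G.edgeSet),
    ← Finset.card_filter, ← SimpleGraph.card_incidenceFinset_eq_degree]
  congr 1
  rw [incidenceFinset_eq_filter]
  ext e; simp

lemma sum_inc2 {u v : V} (h : u ≠ v) :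
    ∑ e : G.edgeSet, (if u ∈ (e : Sym2 V) then (1:ℕ) else 0) * (if v ∈ (e : Sym2 V) then 1 else 0)
      = if G.Adj u v then 1 else 0 := by
  rw [Finset.sum_set_coe (f := fun e => (if u ∈ e then (1:ℕ) else 0) * (if v ∈ e then 1 else 0))
    (s := G.edgeSet)]
  have : ∀ e ∈ G.edgeSet.toFinset,
      (if u ∈ e then (1:ℕ) else 0) * (if v ∈ e then 1 else 0) = if e = s(u,v) then 1 else 0 := by
    intro e _
    by_cases h1 : u ∈ e <;> by_cases h2 : v ∈ e <;>
      simp [h1, h2, ← Sym2.mem_and_mem_iff h] <;> tauto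
  rw [Finset.sum_congr rfl this, Finset.sum_ite_eq' _ (s(u,v))]
  simp [SimpleGraph.mem_edgeSet]

instance extDecI : DecidableRel (extendGraph G).Adj := extendDec G

lemma degree_eq_sum {W : Type} [Fintype W] [DecidableEq W] (H : SimpleGraph W) [DecidableRel H.Adj] (v : W) :
    H.degree v = ∑ x : W, if H.Adj v x then 1 else 0 := by
  rw [← Finset.card_filter, SimpleGraph.degree, neighborFinset_eq_filter]

lemma degree_ext_inl (u : V) : (extendGraph G).degree (Sum.inl u) = 2 * G.degree u := by
  letI : Fintype (↑(extendGraph G).edgeSet) := by infer_instance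
  rw [degree_eq_sum, Fintype.sum_sum_type]
  have h1 : ∀ v : V, ((extendGraph G).Adj (Sum.inl u) (Sum.inl v)) = G.Adj u v := fun v => rfl
  have h2 : ∀ e : G.edgeSet,
      ((extendGraph G).Adj (Sum.inl u) (Sum.inr e)) = (u ∈ (e : Sym2 V)) := fun e => rfl
  simp only [h1, h2]
  rw [← degree_eq_sum, sum_inc]
  ring

lemma degree_ext_inr (e : G.edgeSet) : (extendGraph G).degree (Sum.inr e) = 2 := by
  rw [degree_eq_sum, Fintype.sum_sum_type]
  have h2 : ∀ f : G.edgeSet, ((extendGraph G).Adj (Sum.inr e) (Sum.inr f)) = False := fun _ => rfl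
  simp only [h2, if_false, Finset.sum_const_zero, add_zero]
  obtain ⟨es, he⟩ := e
  induction es with
  | _ a b =>
    have hab : a ≠ b := G.ne_of_adj (by exact he)
    have : ∀ v : V, ((extendGraph G).Adj (Sum.inr ⟨s(a,b), he⟩) (Sum.inl v)) = (v ∈ s(a,b)) :=
      fun v => rfl
    simp only [this]
    rw [← Finset.card_filter]
    have : Finset.univ.filter (fun v => v ∈ s(a,b)) = {a, b} := by
      ext v; simp [Sym2.mem_iff]
    rw [this, Finset.card_insert_of_notMem (by simp [hab]), Finset.card_singleton]

lemma sum_incR (u : V) : ∑ e : G.edgeSet, (if u ∈ (e : Sym2 V) then (1:ℝ) else 0) = (G.degree u : ℝ) := by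
  rw [← sum_inc G u]
  push_cast
  rfl

lemma sum_inc2R (u v : V) :
    ∑ e : G.edgeSet, (if u ∈ (e : Sym2 V) then (1:ℝ) else 0) * (if v ∈ (e : Sym2 V) then (1:ℝ) else 0)
      = (if G.Adj u v then 1 else 0) + (if u = v then (G.degree u : ℝ) else 0) := by
  by_cases h : u = v
  · subst h
    simp only [if_pos rfl, SimpleGraph.irrefl, if_false, zero_add]
    rw [← sum_incR G u]
    apply Finset.sum_congr rfl
    intro e _
    by_cases hu : u ∈ (e : Sym2 V) <;> simp [hu]
  · have := sum_inc2 G h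
    simp only [if_neg h, add_zero]
    have cast := congrArg (fun n : ℕ => (n : ℝ)) this
    push_cast at cast
    rw [← cast]

noncomputable def tmat {W : Type} [Fintype W] [DecidableEq W] (H : SimpleGraph W)
    [DecidableRel H.Adj] : Matrix W W ℝ :=
  Matrix.of fun u v => (if H.Adj u v then (1 : ℝ) else 0) / (H.degree u : ℝ)

lemma tmat_ext_det (hdeg : ∀ u, 0 < G.degree u) (x : ℝ) (hx : x ≠ 0) :
    (4*x) ^ (Fintype.card V) *
      (x • (1 : Matrix (V ⊕ G.edgeSet) (V ⊕ G.edgeSet) ℝ) - tmat (extendGraph G)).det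
      = x ^ (Fintype.card G.edgeSet) * (2*x+1) ^ (Fintype.card V) *
        ((2*x-1) • (1 : Matrix V V ℝ) - tmat G).det := by
  classical
  set A : Matrix V V ℝ := x • 1 - (1/2 : ℝ) • tmat G with hA
  set B : Matrix V G.edgeSet ℝ :=
    Matrix.of fun u e => -((if u ∈ (e : Sym2 V) then (1:ℝ) else 0)/(2*(G.degree u : ℝ))) with hB
  set Cm : Matrix G.edgeSet V ℝ :=
    Matrix.of fun e u => -((if u ∈ (e : Sym2 V) then (1:ℝ) else 0)/2) with hCm
  set D : Matrix G.edgeSet G.edgeSet ℝ := x • 1 with hD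
  have hblock : x • (1 : Matrix (V ⊕ G.edgeSet) (V ⊕ G.edgeSet) ℝ) - tmat (extendGraph G)
      = Matrix.fromBlocks A B Cm D := by
    ext (u | e) (v | f)
    · have : (extendGraph G).degree (Sum.inl u) = 2 * G.degree u := degree_ext_inl G u
      simp only [Matrix.sub_apply, Matrix.smul_apply, Matrix.one_apply, Matrix.fromBlocks_apply₁₁,
        tmat, Matrix.of_apply, hA, Matrix.sub_apply, Matrix.smul_apply, Matrix.one_apply, this]
      have h' : ((extendGraph G).Adj (Sum.inl u) (Sum.inl v)) ↔ G.Adj u v := Iff.rfl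
      simp only [h']
      push_cast
      by_cases huv : u = v <;> by_cases hadj : G.Adj u v <;>
        simp [huv, hadj, Sum.inl.injEq] <;> ring
    · have : (extendGraph G).degree (Sum.inl u) = 2 * G.degree u := degree_ext_inl G u
      simp only [Matrix.sub_apply, Matrix.smul_apply, Matrix.one_apply, Matrix.fromBlocks_apply₁₂,
        tmat, Matrix.of_apply, this, hB]
      have h' : ((extendGraph G).Adj (Sum.inl u) (Sum.inr f)) ↔ (u ∈ (f : Sym2 V)) := Iff.rfl
      simp only [h']
      push_cast
      by_cases hm : u ∈ (f : Sym2 V) <;> simp [hm] <;> ring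
    · have hd : (extendGraph G).degree (Sum.inr e) = 2 := degree_ext_inr G e
      simp only [Matrix.sub_apply, Matrix.smul_apply, Matrix.one_apply, Matrix.fromBlocks_apply₂₁,
        tmat, Matrix.of_apply, hd, hCm]
      have h' : ((extendGraph G).Adj (Sum.inr e) (Sum.inl v)) ↔ (v ∈ (e : Sym2 V)) := Iff.rfl
      simp only [h']
      by_cases hm : v ∈ (e : Sym2 V) <;> simp [hm] <;> ring
    · have h' : ((extendGraph G).Adj (Sum.inr e) (Sum.inr f)) ↔ False := Iff.rfl
      simp only [Matrix.sub_apply, Matrix.smul_apply, Matrix.one_apply, Matrix.fromBlocks_apply₂₂,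
        tmat, Matrix.of_apply, h', hD]
      by_cases hef : e = f <;> simp [hef, Sum.inr.injEq]
  letI : Invertible D := ⟨x⁻¹ • 1, by
      rw [hD, smul_mul_assoc, Matrix.one_mul, smul_smul, inv_mul_cancel₀ hx, one_smul], by
      rw [hD, smul_mul_assoc, Matrix.one_mul, smul_smul, mul_inv_cancel₀ hx, one_smul]⟩
  have hinv : (⅟D) = x⁻¹ • (1 : Matrix G.edgeSet G.edgeSet ℝ) := rfl
  rw [hblock, Matrix.det_fromBlocks₂₂]
  have hschur : A - B * ⅟D * Cm
      = ((2*x+1)/(4*x)) • ((2*x-1) • (1 : Matrix V V ℝ) - tmat G) := by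
    rw [hinv, Matrix.mul_smul, Matrix.mul_one, Matrix.smul_mul]
    ext u v
    have hd : (G.degree u : ℝ) ≠ 0 := by
      have := hdeg u; positivity
    have hbc : (B * Cm) u v
        = ((if G.Adj u v then 1 else 0) + (if u = v then (G.degree u : ℝ) else 0)) / (4 * (G.degree u : ℝ)) := by
      rw [Matrix.mul_apply, ← sum_inc2R G u v, Finset.sum_div]
      apply Finset.sum_congr rfl
      intro e _
      simp only [hB, hCm, Matrix.of_apply]
      by_cases hu : u ∈ (e : Sym2 V) <;> by_cases hv : v ∈ (e : Sym2 V) <;>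
        simp only [hu, hv, if_true, if_false] <;> field_simp <;> ring
    simp only [Matrix.sub_apply, Matrix.smul_apply, Matrix.one_apply, hA, Matrix.sub_apply,
      Matrix.smul_apply, Matrix.one_apply, hbc, tmat, Matrix.of_apply, smul_eq_mul]
    by_cases huv : u = v <;> by_cases hadj : G.Adj u v
    · exact absurd (huv ▸ hadj) (G.irrefl)
    · subst huv; simp only [if_pos rfl, if_neg hadj, if_true]
      field_simp
      ring
    · simp only [if_neg huv, if_pos hadj]
      field_simp
      ring
    · simp only [if_neg huv, if_neg hadj]
      field_simp
      ring
  rw [hschur, Matrix.det_smul, Matrix.det_smul, Matrix.det_one, mul_one]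
  have h4x : (4*x) ≠ 0 := by
    intro h; apply hx; linarith
  rw [div_pow]
  field_simp

lemma card_edge_ext :
    Fintype.card (extendGraph G).edgeSet = 3 * Fintype.card G.edgeSet := by
  classical
  have h1 := SimpleGraph.sum_degrees_eq_twice_card_edges (extendGraph G)
  have h2 := SimpleGraph.sum_degrees_eq_twice_card_edges G
  rw [Fintype.sum_sum_type] at h1
  simp only [degree_ext_inl, degree_ext_inr] at h1
  rw [Finset.sum_const, Finset.card_univ, ← Finset.mul_sum, h2,
    SimpleGraph.edgeFinset_card, SimpleGraph.edgeFinset_card] at h1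
  simp only [smul_eq_mul] at h1
  omega

lemma degpos_ext (hdeg : ∀ u, 0 < G.degree u) :
    ∀ z, 0 < (extendGraph G).degree z := by
  rintro (u | e)
  · rw [degree_ext_inl]; exact Nat.mul_pos (by norm_num) (hdeg u)
  · rw [degree_ext_inr]; norm_num

lemma charpoly_eval {n : Type} [Fintype n] [DecidableEq n] (M : Matrix n n ℝ) (x : ℝ) :
    M.charpoly.eval x = (x • (1 : Matrix n n ℝ) - M).det := by
  have h := RingHom.map_det (Polynomial.evalRingHom x) (Matrix.charmatrix M)
  rw [Matrix.charpoly]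
  simp only [Polynomial.coe_evalRingHom] at h
  rw [h]
  congr 1
  ext i j
  by_cases hij : i = j <;>
    simp [Matrix.charmatrix_apply, hij, Matrix.one_apply, Matrix.diagonal_apply]

lemma charpoly_ext (hdeg : ∀ u, 0 < G.degree u) :
    (Polynomial.C (4:ℝ) * Polynomial.X) ^ (Fintype.card V) * (tmat (extendGraph G)).charpoly
      = Polynomial.X ^ (Fintype.card G.edgeSet) *
          (Polynomial.C 2 * Polynomial.X + 1) ^ (Fintype.card V) *
          ((tmat G).charpoly.comp (Polynomial.C 2 * Polynomial.X - 1)) := by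
  classical
  apply Polynomial.eq_of_infinite_eval_eq
  apply Set.Infinite.mono (s := {(0:ℝ)}ᶜ)
  · intro x hx
    have hx0 : x ≠ 0 := hx
    simp only [Set.mem_setOf_eq, Polynomial.eval_mul, Polynomial.eval_pow,
      Polynomial.eval_comp, Polynomial.eval_add, Polynomial.eval_sub, Polynomial.eval_one,
      Polynomial.eval_C, Polynomial.eval_X]
    rw [charpoly_eval, charpoly_eval]
    exact tmat_ext_det G hdeg x hx0
  · exact Set.Finite.infinite_compl (Set.finite_singleton 0)

end Basics

section GBlevel

def gbN (X : GB) : ℕ := letI := X.fin; Fintype.card X.V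

def gbE (X : GB) : ℕ :=
  letI := X.fin; letI := X.deq; letI := X.dec; Fintype.card X.G.edgeSet

noncomputable def gbP (X : GB) : Polynomial ℝ :=
  letI := X.fin; letI := X.deq; (transMat X).charpoly

lemma gbN_ext (X : GB) : gbN (extendGB X) = gbN X + gbE X := by
  letI := X.fin; letI := X.deq; letI := X.dec
  exact Fintype.card_sum

lemma gbE_ext (X : GB) : gbE (extendGB X) = 3 * gbE X := by
  letI := X.fin; letI := X.deq; letI := X.dec
  exact card_edge_ext X.G

lemma gb_degpos_ext (X : GB)
    (h : (letI := X.fin; letI := X.dec; ∀ u, 0 < X.G.degree u)) :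
    (letI := (extendGB X).fin; letI := (extendGB X).dec;
      ∀ u, 0 < (extendGB X).G.degree u) := by
  letI := X.fin; letI := X.deq; letI := X.dec
  exact degpos_ext X.G h

lemma gb_charpoly_ext (X : GB)
    (h : (letI := X.fin; letI := X.dec; ∀ u, 0 < X.G.degree u)) :
    (Polynomial.C (4:ℝ) * Polynomial.X) ^ (gbN X) * gbP (extendGB X)
      = Polynomial.X ^ (gbE X) *
          (Polynomial.C 2 * Polynomial.X + 1) ^ (gbN X) *
          ((gbP X).comp (Polynomial.C 2 * Polynomial.X - 1)) := by
  letI := X.fin; letI := X.deq; letI := X.dec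
  exact charpoly_ext X.G h

lemma gb_degpos (g : ℕ) :
    (letI := (PGB g).fin; letI := (PGB g).dec; ∀ u, 0 < (PGB g).G.degree u) := by
  induction g with
  | zero =>
    letI := (PGB 0).fin; letI := (PGB 0).dec
    decide
  | succ g ih => exact gb_degpos_ext (PGB g) ih

lemma gbN_zero : gbN (PGB 0) = 3 := by
  simp [gbN, PGB]
  rfl

lemma gbE_zero : gbE (PGB 0) = 3 := by
  have h := SimpleGraph.sum_degrees_eq_twice_card_edges (⊤ : SimpleGraph (Fin 3))
  simp only [SimpleGraph.complete_graph_degree, Fintype.card_fin,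
    SimpleGraph.edgeFinset_card] at h
  simp only [Finset.sum_const, Finset.card_univ, Fintype.card_fin, smul_eq_mul] at h
  show Fintype.card (⊤ : SimpleGraph (Fin 3)).edgeSet = 3
  omega

lemma gbE_PGB (g : ℕ) : gbE (PGB g) = 3 ^ (g + 1) := by
  induction g with
  | zero => simpa using gbE_zero
  | succ g ih => rw [show PGB (g+1) = extendGB (PGB g) from rfl, gbE_ext, ih]; ring

lemma gbN_PGB (g : ℕ) : 2 * gbN (PGB g) = 3 ^ (g + 1) + 3 := by
  induction g with
  | zero => simp [gbN_zero]
  | succ g ih =>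
    rw [show PGB (g+1) = extendGB (PGB g) from rfl, gbN_ext, gbE_PGB]
    ring_nf
    ring_nf at ih
    omega

lemma gbN_le_gbE (g : ℕ) : gbN (PGB g) ≤ gbE (PGB g) := by
  have h1 := gbN_PGB g
  have h2 := gbE_PGB g
  have h3 : 3 ≤ 3 ^ (g + 1) := Nat.le_self_pow (by omega) 3
  omega

noncomputable def Rm : ℕ → Multiset ℝ
  | 0 => {1, -1/2, -1/2}
  | g + 1 =>
      Multiset.replicate (gbE (PGB g) - gbN (PGB g)) 0
        + Multiset.replicate (gbN (PGB g)) (-1/2)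
        + (Rm g).map (fun a => (a + 1) / 2)

lemma card_Rm (g : ℕ) : Multiset.card (Rm g) = gbN (PGB g) := by
  induction g with
  | zero => simp [Rm, gbN_zero]
  | succ g ih =>
    simp only [Rm, Multiset.card_add, Multiset.card_replicate, Multiset.card_map, ih]
    have := gbN_le_gbE g
    rw [show PGB (g+1) = extendGB (PGB g) from rfl, gbN_ext]
    omega

lemma gbP_zero : gbP (PGB 0) = ((Rm 0).map (fun a => Polynomial.X - Polynomial.C a)).prod := by
  apply Polynomial.eq_of_infinite_eval_eq
  apply Set.Infinite.mono (s := Set.univ)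
  swap
  · exact Set.infinite_univ
  intro x _
  letI := (PGB 0).fin
  letI := (PGB 0).deq
  show (gbP (PGB 0)).eval x = _
  have h1 : (gbP (PGB 0)).eval x
      = (x • (1 : Matrix (Fin 3) (Fin 3) ℝ) - tmat (⊤ : SimpleGraph (Fin 3))).det :=
    charpoly_eval _ x
  rw [h1]
  have hdeg : ∀ u : Fin 3, ((⊤ : SimpleGraph (Fin 3)).degree u : ℝ) = 2 := by
    intro u; rw [SimpleGraph.complete_graph_degree]; norm_num
  rw [Matrix.det_fin_three]
  simp only [Matrix.sub_apply, Matrix.smul_apply, Matrix.one_apply, tmat, Matrix.of_apply,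
    hdeg, smul_eq_mul, SimpleGraph.top_adj]
  norm_num [Rm, Fin.ext_iff]
  ring

open Polynomial in
lemma gbP_eq (g : ℕ) :
    gbP (PGB g) = ((Rm g).map (fun a => Polynomial.X - Polynomial.C a)).prod := by
  induction g with
  | zero => exact gbP_zero
  | succ g ih =>
    have key := gb_charpoly_ext (PGB g) (gb_degpos g)
    rw [show extendGB (PGB g) = PGB (g+1) from rfl] at key
    have hcomp : (gbP (PGB g)).comp (C 2 * X - 1)
        = (C (2:ℝ)) ^ (gbN (PGB g)) *
          ((Rm g).map (fun a => X - C ((a+1)/2))).prod := by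
      rw [ih, Polynomial.multiset_prod_comp, Multiset.map_map]
      simp only [Function.comp_def]
      have hstep : ∀ a : ℝ,
          (X - C a).comp (C 2 * X - 1)
            = C (2:ℝ) * (X - C ((a+1)/2)) := by
        intro a
        simp only [Polynomial.sub_comp, Polynomial.X_comp, Polynomial.C_comp]
        rw [mul_sub, ← Polynomial.C_mul]
        rw [show (2:ℝ) * ((a+1)/2) = a + 1 by ring, show (C (a+1) : ℝ[X]) = C a + 1 by
          rw [Polynomial.C_add]; norm_num]
        ring
      rw [Multiset.map_congr rfl (fun a _ => hstep a), Multiset.prod_map_mul]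
      congr 1
      rw [Multiset.map_const', Multiset.prod_replicate, card_Rm]
    rw [hcomp] at key
    have hc4 : (C (4:ℝ) : ℝ[X]) = C 2 * C 2 := by rw [← Polynomial.C_mul]; norm_num
    have hc21 : (C (2:ℝ) * X + 1 : ℝ[X]) = C 2 * (X + C (1/2)) := by
      rw [mul_add, ← Polynomial.C_mul]
      norm_num
    rw [hc4] at key
    have hX : (X : ℝ[X]) ^ (gbE (PGB g))
        = X ^ (gbN (PGB g)) * X ^ (gbE (PGB g) - gbN (PGB g)) := by
      rw [← pow_add]
      congr 1
      have := gbN_le_gbE g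
      omega
    have hc : (C (2:ℝ))^(gbN (PGB g)) * (C (2:ℝ))^(gbN (PGB g)) * (X:ℝ[X])^(gbN (PGB g)) ≠ 0 :=
      mul_ne_zero (mul_ne_zero (pow_ne_zero _ (Polynomial.C_ne_zero.mpr (by norm_num)))
        (pow_ne_zero _ (Polynomial.C_ne_zero.mpr (by norm_num))))
        (pow_ne_zero _ Polynomial.X_ne_zero)
    have hmain : gbP (PGB (g+1))
        = X ^ (gbE (PGB g) - gbN (PGB g)) * (X + C (1/2)) ^ (gbN (PGB g)) *
          ((Rm g).map (fun a => X - C ((a+1)/2))).prod := by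
      apply mul_left_cancel₀ hc
      calc (C (2:ℝ))^(gbN (PGB g)) * (C (2:ℝ))^(gbN (PGB g)) * (X:ℝ[X])^(gbN (PGB g)) *
            gbP (PGB (g+1))
          = (C 2 * C 2 * X) ^ (gbN (PGB g)) * gbP (PGB (g+1)) := by ring
        _ = X ^ gbE (PGB g) * (C 2 * X + 1) ^ gbN (PGB g) *
              ((C (2:ℝ)) ^ gbN (PGB g) *
                ((Rm g).map (fun a => X - C ((a+1)/2))).prod) := key
        _ = _ := by rw [hc21, mul_pow, hX]; ring
    rw [hmain, Rm]
    rw [Multiset.map_add, Multiset.map_add, Multiset.prod_add, Multiset.prod_add,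
      Multiset.map_replicate, Multiset.map_replicate, Multiset.prod_replicate,
      Multiset.prod_replicate, Multiset.map_map]
    rw [show (X - C (0:ℝ)) = X by simp, show (X - C (-1/2 : ℝ)) = X + C (1/2) by
      rw [show ((-1:ℝ)/2) = -(1/2) by norm_num, Polynomial.C_neg]; ring]
    rfl

lemma roots_eq (g : ℕ) : transCharRoots (PGB g) = Rm g := by
  have h : transCharRoots (PGB g) = (gbP (PGB g)).roots := rfl
  rw [h, gbP_eq, Polynomial.roots_multiset_prod_X_sub_C]

def mA : ℕ → ℕ
  | 0 => 2
  | t + 1 => gbN (PGB t)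

def mB : ℕ → ℕ
  | 0 => 0
  | t + 1 => gbE (PGB t) - gbN (PGB t)

lemma mA_cast (t : ℕ) : (mA t : ℝ) = ((3:ℝ) ^ t + 3) / 2 := by
  cases t with
  | zero => norm_num [mA]
  | succ t =>
    have h := gbN_PGB t
    have : (2:ℝ) * (gbN (PGB t) : ℝ) = 3 ^ (t+1) + 3 := by exact_mod_cast congrArg (fun n : ℕ => (n:ℝ)) h
    show ((gbN (PGB t) : ℝ)) = _
    linarith [this]

lemma mB_cast (t : ℕ) (ht : 1 ≤ t) : (mB t : ℝ) = ((3:ℝ) ^ t - 3) / 2 := by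
  cases t with
  | zero => omega
  | succ t =>
    have h1 := gbN_PGB t
    have h2 := gbE_PGB t
    have h3 := gbN_le_gbE t
    show ((gbE (PGB t) - gbN (PGB t) : ℕ) : ℝ) = _
    have : (gbE (PGB t) - gbN (PGB t)) * 2 = 3 ^ (t+1) - 3 := by omega
    have h4 : ((gbE (PGB t) - gbN (PGB t)) * 2 : ℕ) = ((3:ℕ) ^ (t+1) - 3 : ℕ) := this
    have h5 : (3:ℕ) ≤ 3 ^ (t+1) := Nat.le_self_pow (by omega) 3
    have := congrArg (fun n : ℕ => (n:ℝ)) h4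
    push_cast [h5] at this
    linarith [this]

noncomputable def lamA (s : ℕ) : ℝ := 1 - 3 / 2 ^ (s + 1)
noncomputable def lamB (s : ℕ) : ℝ := 1 - 1 / 2 ^ s

lemma one_mem_Rm (g : ℕ) : (1:ℝ) ∈ Rm g := by
  induction g with
  | zero => simp [Rm]
  | succ g ih =>
    rw [Rm, Multiset.mem_add]
    right
    exact Multiset.mem_map.mpr ⟨1, ih, by norm_num⟩

lemma erase_Rm (g : ℕ) :
    (Rm g).erase 1
      = (∑ s ∈ Finset.range (g+1), Multiset.replicate (mA (g - s)) (lamA s))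
        + (∑ s ∈ Finset.range g, Multiset.replicate (mB (g - s)) (lamB s)) := by
  induction g with
  | zero =>
    show ({1, -1/2, -1/2} : Multiset ℝ).erase 1 = _
    simp [lamA, Multiset.replicate, mA]
    norm_num
    rfl
  | succ g ih =>
    have hf : Function.Injective (fun a : ℝ => (a + 1) / 2) := by
      intro a b h; simp only at h; linarith [h]
    have h1 : (Rm (g+1)).erase 1
        = Multiset.replicate (gbE (PGB g) - gbN (PGB g)) 0
            + Multiset.replicate (gbN (PGB g)) (-1/2)
            + ((Rm g).erase 1).map (fun a => (a + 1) / 2) := by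
      rw [Rm, Multiset.erase_add_right_pos _
        (Multiset.mem_map.mpr ⟨1, one_mem_Rm g, by norm_num⟩)]
      rw [Multiset.map_erase _ hf, show ((1:ℝ)+1)/2 = 1 by norm_num]
    rw [h1, ih]
    have hmap : ∀ (r : Finset ℕ) (h : ℕ → Multiset ℝ),
        (∑ s ∈ r, h s).map (fun a : ℝ => (a+1)/2)
          = ∑ s ∈ r, (h s).map (fun a : ℝ => (a+1)/2) :=
      fun r h => map_sum (Multiset.mapAddMonoidHom _) _ _
    rw [Multiset.map_add, hmap, hmap]
    simp only [Multiset.map_replicate]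
    have hA : ∀ s, ((fun a : ℝ => (a+1)/2) (lamA s)) = lamA (s+1) := by
      intro s
      simp only [lamA]
      rw [pow_succ]
      field_simp
      ring
    have hB : ∀ s, ((fun a : ℝ => (a+1)/2) (lamB s)) = lamB (s+1) := by
      intro s
      simp only [lamB]
      rw [pow_succ]
      have : (2:ℝ) ^ s ≠ 0 := pow_ne_zero _ (by norm_num)
      field_simp
      ring
    simp only [hA, hB]
    rw [Finset.sum_range_succ' (fun s => Multiset.replicate (mA (g + 1 - s)) (lamA s)) (g+1)]
    rw [Finset.sum_range_succ' (fun s => Multiset.replicate (mB (g + 1 - s)) (lamB s)) g]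
    have e1 : ∀ s, g + 1 - (s + 1) = g - s := fun s => by omega
    simp only [e1, Nat.sub_zero]
    have e2 : mA (g+1) = gbN (PGB g) := rfl
    have e3 : mB (g+1) = gbE (PGB g) - gbN (PGB g) := rfl
    have e4 : lamA 0 = -1/2 := by norm_num [lamA]
    have e5 : lamB 0 = 0 := by norm_num [lamB]
    rw [e2, e3, e4, e5]
    abel

lemma termA (g s : ℕ) (hs : s ≤ g) :
    (mA (g - s) : ℝ) * (1 / (1 - lamA s ^ 2))
      = 2 ^ (2*s+1) * ((3:ℝ) ^ ((g:ℤ) - s - 1) + 1) / (2 ^ (s+2) - 3) := by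
  rw [mA_cast, lamA]
  have h3 : (3:ℝ) ^ ((g:ℤ) - s - 1) = (3:ℝ) ^ (g - s : ℕ) / 3 := by
    have he : ((g:ℤ) - s - 1) = ((g - s : ℕ) : ℤ) - 1 := by
      push_cast [hs]; ring
    rw [he, zpow_sub₀ (by norm_num : (3:ℝ) ≠ 0), zpow_natCast, zpow_one]
  rw [h3]
  have h2s : (2:ℝ)^(s+1) ≠ 0 := pow_ne_zero _ (by norm_num)
  have hge : (4:ℝ) ≤ 2^(s+2) := by
    calc (4:ℝ) = 2^2 := by norm_num
    _ ≤ 2^(s+2) := pow_le_pow_right₀ (by norm_num) (by omega)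
  have hden : (2:ℝ)^(s+2) - 3 ≠ 0 := by intro h; nlinarith
  have hval : 1 - ((1:ℝ) - 3/2^(s+1))^2 = 3*((2:ℝ)^(s+2) - 3)/2^(2*s+2) := by
    have h22 : (2:ℝ)^(2*s+2) = (2^(s+1))^2 := by rw [← pow_mul]; ring_nf
    have h12 : (2:ℝ)^(s+2) = 2^(s+1) * 2 := by rw [← pow_succ]
    rw [h22, h12]
    field_simp
    ring
  rw [hval]
  have hnz : (3:ℝ)*((2:ℝ)^(s+2) - 3) ≠ 0 := by
    apply mul_ne_zero (by norm_num) hden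
  have h2s2 : (2:ℝ)^(2*s+2) ≠ 0 := pow_ne_zero _ (by norm_num)
  rw [show (2:ℝ)^(2*s+2) = 2^(2*s+1) * 2 by rw [← pow_succ]]
  field_simp

lemma termB (g s : ℕ) (hs : s < g) :
    (mB (g - s) : ℝ) * (1 / (1 - lamB s ^ 2))
      = 2 ^ (2*(s:ℤ)-1) * ((3:ℝ) ^ ((g:ℤ) - s) - 3) / (2 ^ (s+1) - 1) := by
  rw [mB_cast _ (by omega), lamB]
  have h3 : (3:ℝ) ^ ((g:ℤ) - s) = (3:ℝ) ^ (g - s : ℕ) := by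
    have he : ((g:ℤ) - s) = ((g - s : ℕ) : ℤ) := by push_cast [le_of_lt hs]; ring
    rw [he, zpow_natCast]
  rw [h3]
  have h2 : (2:ℝ) ^ (2*(s:ℤ)-1) = (2:ℝ)^(2*s) / 2 := by
    have he : (2*(s:ℤ)-1) = ((2*s : ℕ) : ℤ) - 1 := by push_cast; ring
    rw [he, zpow_sub₀ (by norm_num : (2:ℝ) ≠ 0), zpow_natCast, zpow_one]
  rw [h2]
  have h2s : (2:ℝ)^s ≠ 0 := pow_ne_zero _ (by norm_num)
  have hge : (2:ℝ) ≤ 2^(s+1) := by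
    calc (2:ℝ) = 2^1 := by norm_num
    _ ≤ 2^(s+1) := pow_le_pow_right₀ (by norm_num) (by omega)
  have hden : (2:ℝ)^(s+1) - 1 ≠ 0 := by intro h; nlinarith
  have hval : 1 - ((1:ℝ) - 1/2^s)^2 = ((2:ℝ)^(s+1) - 1)/2^(2*s) := by
    have h22 : (2:ℝ)^(2*s) = (2^s)^2 := by rw [← pow_mul]; ring_nf
    have h12 : (2:ℝ)^(s+1) = 2^s * 2 := by rw [← pow_succ]
    rw [h22, h12]
    field_simp
    ring
  rw [hval]
  have h2s2 : (2:ℝ)^(2*s) ≠ 0 := pow_ne_zero _ (by norm_num)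
  field_simp



/-- for `g ≥ 2`, the Kemeny constant of the two-step chain on the
pseudofractal scale-free web, `K(F'_g) = Σ_{k=2}^{N_g} 1/(1 − λ_k²)` (where
`λ₂,…,λ_{N_g}` are the eigenvalues of `P_g` other than the simple eigenvalue
`1`), has the closed form
`Σ_{s=0}^{g} 2^{2s+1}(3^{g−s−1}+1)/(2^{s+2}−3)
 + Σ_{s=0}^{g−2} 2^{2s−1}(3^{g−s}−3)/(2^{s+1}−1)`. -/
theorem stmt13 (g : ℕ) (hg : 2 ≤ g) :
    (((transCharRoots (PGB g)).erase 1).map (fun l => 1 / (1 - l ^ 2))).sum =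
      ∑ s ∈ Finset.range (g + 1),
        (2 : ℝ) ^ (2 * s + 1) * ((3 : ℝ) ^ ((g : ℤ) - s - 1) + 1) /
          (2 ^ (s + 2) - 3)
      + ∑ s ∈ Finset.range (g - 1),
        (2 : ℝ) ^ (2 * (s : ℤ) - 1) * ((3 : ℝ) ^ ((g : ℤ) - s) - 3) /
          (2 ^ (s + 1) - 1) := by
  classical
  rw [roots_eq, erase_Rm]
  have hmap : ∀ (r : Finset ℕ) (k : ℕ → Multiset ℝ),
      ((∑ s ∈ r, k s).map (fun l : ℝ => 1 / (1 - l ^ 2))).sum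
        = ∑ s ∈ r, ((k s).map (fun l : ℝ => 1 / (1 - l ^ 2))).sum := by
    intro r k
    induction r using Finset.cons_induction with
    | empty => simp
    | cons a r ha ih =>
        rw [Finset.sum_cons, Finset.sum_cons, Multiset.map_add, Multiset.sum_add, ih]
  rw [Multiset.map_add, Multiset.sum_add, hmap, hmap]
  simp only [Multiset.map_replicate, Multiset.sum_replicate, nsmul_eq_mul]
  congr 1
  · apply Finset.sum_congr rfl
    intro s hs
    exact termA g s (by simpa using Nat.lt_succ_iff.mp (Finset.mem_range.mp hs))
  · have hsplit : Finset.range g = Finset.range ((g-1)+1) := by congr 1; omega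
    rw [hsplit, Finset.sum_range_succ]
    have hz : (mB (g - (g-1)) : ℝ) = 0 := by
      rw [show g - (g-1) = 1 by omega]
      show ((gbE (PGB 0) - gbN (PGB 0) : ℕ) : ℝ) = 0
      rw [gbE_zero, gbN_zero]
      norm_num
    rw [hz, zero_mul, add_zero]
    apply Finset.sum_congr rfl
    intro s hs
    exact termB g s (by have := Finset.mem_range.mp hs; omega)
end GBlevel
end
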